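/- For any n ≥ 1, ℓ ∈ {1,…,n}, ε ∈ (0,1), and x ∈ (0, 1−ε), the quantile function of the Beta(ℓ, n−ℓ+1) distribution satisfies 0 ≤ F_{U_(ℓ:n)}⁻¹(x+ε) − F_{U_(ℓ:n)}⁻¹(x) ≤ (ε/√(n+2)) · √2 / g(min{x, 1−x−ε}), where g(t) := sup_{δ ∈ (0, min{t, 1−t})} (t−δ)/√(log(1/δ)) for t ∈ (0, 1/2]. -/

import Mathlib

open MeasureTheory ProbabilityTheory Set

/-- The `r`-th smallest value (order statistic, 1-indexed, ties with multiplicity)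
of a finite real vector. -/
noncomputable def orderStat {N : ℕ} (S : Fin N → ℝ) (r : ℕ) : ℝ :=
  ((Multiset.ofList (List.ofFn S)).sort (· ≤ ·)).getD (r - 1) 0

/-- Product of `N` i.i.d. uniform distributions on `[0,1]`. -/
noncomputable def unifPi (N : ℕ) : Measure (Fin N → ℝ) :=
  Measure.pi fun _ => volume.restrict (Icc (0:ℝ) 1)

/-- The Beta(r, N-r+1) distribution: the law of the `r`-th order statistic of
`N` i.i.d. uniform random variables on `[0,1]`. -/
noncomputable def betaOS (N r : ℕ) : Measure ℝ :=
  Measure.map (fun u => orderStat u r) (unifPi N)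

/-- The cdf of the Beta(r, N-r+1) distribution (cdf of `U_(r:N)`). -/
noncomputable def betaCDF (N r : ℕ) (t : ℝ) : ℝ := (betaOS N r (Iic t)).toReal

/-- Generalized inverse (quantile function) of a cdf. -/
noncomputable def genInv (F : ℝ → ℝ) (p : ℝ) : ℝ := sInf {x | p ≤ F x}

/-- Quantile function of the Beta(r, N-r+1) distribution. -/
noncomputable def betaQuantile (N r : ℕ) (p : ℝ) : ℝ := genInv (betaCDF N r) p

/-- Quantile-of-quantiles: the `k`-th smallest of the `m` within-group `ℓ`-th
order statistics of an `n × m` array. -/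
noncomputable def qqStat {n m : ℕ} (ℓ k : ℕ) (Z : Fin n → Fin m → ℝ) : ℝ :=
  orderStat (fun j => orderStat (fun i => Z i j) ℓ) k

/-- Product of `n × m` i.i.d. uniform distributions on `[0,1]`. -/
noncomputable def unifPi2 (n m : ℕ) : Measure (Fin n → Fin m → ℝ) :=
  Measure.pi fun _ => Measure.pi fun _ => volume.restrict (Icc (0:ℝ) 1)

/-- The law of `U_(ℓ:n, k:m)`, the `k`-th order statistic of the `m` within-group
`ℓ`-th order statistics of an `n × m` array of i.i.d. uniform variables
(equivalently, of `m` i.i.d. Beta(ℓ, n-ℓ+1) variables). -/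
noncomputable def betaBetaOS (n m ℓ k : ℕ) : Measure ℝ :=
  Measure.map (qqStat ℓ k) (unifPi2 n m)

/-- The auxiliary function `g(t) = sup_{δ ∈ (0, min{t,1-t})} (t-δ)/√(log(1/δ))`. -/
noncomputable def gFun (t : ℝ) : ℝ :=
  sSup ((fun δ => (t - δ) / Real.sqrt (Real.log (1/δ))) '' Ioo 0 (min t (1 - t)))

/-- The cdf of the Poisson-Binomial distribution with parameter vector `u`,
evaluated at the integer `r`. -/
noncomputable def pbCDF {m : ℕ} (u : Fin m → ℝ) (r : ℕ) : ℝ :=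
  ∑ A ∈ Finset.univ.powerset.filter (fun A : Finset (Fin m) => A.card ≤ r),
    (∏ j ∈ A, u j) * ∏ j ∈ Aᶜ, (1 - u j)


section AuxProofs

lemma sorted_getD_le_iff {l : List ℝ} (hs : l.Pairwise (· ≤ ·)) {r : ℕ} (h1 : 1 ≤ r)
    (hn : r ≤ l.length) (t : ℝ) :
    l.getD (r - 1) 0 ≤ t ↔ r ≤ l.countP (fun x => decide (x ≤ t)) := by
  have hk : r - 1 < l.length := lt_of_lt_of_le (Nat.sub_lt h1 one_pos) hn
  rw [List.getD_eq_getElem l 0 hk]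
  constructor
  · intro h
    have : ∀ i (hi : i < l.length), i ≤ r - 1 → l[i] ≤ t := by
      intro i hi hir
      rcases lt_or_eq_of_le hir with hlt | heq
      · exact le_trans (List.pairwise_iff_getElem.mp hs i (r-1) hi hk hlt) h
      · subst heq; exact h
    -- count indices
    have hsplit := List.take_append_drop r l
    have : r ≤ (l.take r).countP (fun x => decide (x ≤ t)) := by
      have hlen : (l.take r).length = r := by simp [List.length_take]; omega
      have hall : ∀ x ∈ l.take r, x ≤ t := by
        intro x hx
        obtain ⟨i, hi, rfl⟩ := List.mem_iff_getElem.mp hx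
        rw [List.getElem_take]
        exact this _ _ (by rw [hlen] at hi; omega)
      have := List.countP_eq_length_filter (p := fun x => decide (x ≤ t)) (l := l.take r)
      rw [this]
      have : (l.take r).filter (fun x => decide (x ≤ t)) = l.take r :=
        List.filter_eq_self.mpr (fun a ha => decide_eq_true (hall a ha))
      rw [this, hlen]
    calc r ≤ (l.take r).countP _ := this
      _ ≤ l.countP (fun x => decide (x ≤ t)) := by
          conv_rhs => rw [← hsplit]
          rw [List.countP_append]; omega
  · intro h
    by_contra hgt
    push_neg at hgt
    have hdrop : ∀ x ∈ l.drop (r-1), ¬ (x ≤ t) := by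
      intro x hx hle
      obtain ⟨i, hi, rfl⟩ := List.mem_iff_getElem.mp hx
      rw [List.length_drop] at hi
      have hlt : r - 1 + i < l.length := by omega
      rw [List.getElem_drop] at hle
      have hmono : l[r-1] ≤ l[r-1+i] := by
        rcases Nat.eq_zero_or_pos i with h0 | h0
        · subst h0; simp
        · exact List.pairwise_iff_getElem.mp hs _ _ hk hlt (by omega)
      exact absurd (le_trans hmono hle) (not_le.mpr hgt)
    have hcount : l.countP (fun x => decide (x ≤ t)) ≤ (l.take (r-1)).length := by
      conv_lhs => rw [← List.take_append_drop (r-1) l]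
      rw [List.countP_append]
      have h0 : (l.drop (r-1)).countP (fun x => decide (x ≤ t)) = 0 := by
        rw [List.countP_eq_zero]
        intro a ha; simpa using hdrop a ha
      rw [h0]
      have := List.countP_le_length (p := fun x => decide (x ≤ t)) (l := l.take (r-1))
      omega
    rw [List.length_take] at hcount
    omega


lemma orderStat_le_iff {n r : ℕ} (h1 : 1 ≤ r) (hn : r ≤ n) (u : Fin n → ℝ) (t : ℝ) :
    orderStat u r ≤ t ↔ r ≤ (Finset.univ.filter (fun i => u i ≤ t)).card := by
  set l := (Multiset.ofList (List.ofFn u)).sort (· ≤ ·) with hl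
  have hsort : l.Pairwise (· ≤ ·) := Multiset.pairwise_sort _ _
  have hlen : l.length = n := by
    rw [hl]
    rw [Multiset.length_sort]
    simp
  rw [orderStat, sorted_getD_le_iff hsort h1 (by rw [hlen]; exact hn)]
  have hcount : l.countP (fun x => decide (x ≤ t))
      = (Finset.univ.filter (fun i => u i ≤ t)).card := by
    have h2 : (l : Multiset ℝ) = Multiset.ofList (List.ofFn u) := Multiset.sort_eq _ _
    have h3 : l.countP (fun x => decide (x ≤ t))
        = (List.ofFn u).countP (fun x => decide (x ≤ t)) := by
      have := congrArg (Multiset.countP (fun x => x ≤ t)) h2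
      simpa [Multiset.coe_countP] using this
    rw [h3, List.ofFn_eq_map, List.countP_map]
    rw [Finset.card_filter]
    rw [List.countP_eq_length_filter]
    rw [Finset.sum_boole]
    norm_cast
  rw [hcount]

lemma measurable_count {n : ℕ} (t : ℝ) :
    Measurable (fun u : Fin n → ℝ => (Finset.univ.filter (fun i => u i ≤ t)).card) := by
  have : (fun u : Fin n → ℝ => (Finset.univ.filter (fun i => u i ≤ t)).card)
      = fun u => ∑ i : Fin n, if u i ≤ t then 1 else 0 := by
    funext u; rw [Finset.card_filter]
  rw [this]
  exact Finset.measurable_sum _ (fun i _ =>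
    Measurable.ite (measurableSet_le (measurable_pi_apply i) measurable_const)
      measurable_const measurable_const)

lemma measurableSet_orderStat_le {n r : ℕ} (h1 : 1 ≤ r) (hn : r ≤ n) (t : ℝ) :
    MeasurableSet {u : Fin n → ℝ | orderStat u r ≤ t} := by
  have : {u : Fin n → ℝ | orderStat u r ≤ t}
      = (fun u : Fin n → ℝ => (Finset.univ.filter (fun i => u i ≤ t)).card) ⁻¹' (Ici r) := by
    ext u; simp [orderStat_le_iff h1 hn]
  rw [this]
  exact (measurable_count t) measurableSet_Ici

lemma measurable_orderStat {n r : ℕ} (h1 : 1 ≤ r) (hn : r ≤ n) :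
    Measurable (fun u : Fin n → ℝ => orderStat u r) :=
  measurable_of_Iic (fun t => measurableSet_orderStat_le h1 hn t)


/-- clamp to [0,1] -/
noncomputable def clampI (t : ℝ) : ℝ := max 0 (min t 1)

/-- Binomial tail probability `P(Bin(n,p) ≥ r)` as a polynomial. -/
noncomputable def binTail (n r : ℕ) (p : ℝ) : ℝ :=
  ∑ k ∈ Finset.Icc r n, (n.choose k : ℝ) * p ^ k * (1 - p) ^ (n - k)

lemma clampI_mem (t : ℝ) : clampI t ∈ Icc (0:ℝ) 1 := by
  constructor
  · exact le_max_left _ _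
  · rw [clampI]; simp [le_min_iff]

lemma restrict_Iic (t : ℝ) :
    (volume.restrict (Icc (0:ℝ) 1)) (Iic t) = ENNReal.ofReal (clampI t) := by
  rw [Measure.restrict_apply measurableSet_Iic]
  rcases lt_or_ge t 0 with h | h
  · have : Iic t ∩ Icc (0:ℝ) 1 = ∅ := by
      ext x; simp only [mem_inter_iff, mem_Iic, mem_Icc, mem_empty_iff_false, iff_false]
      intro ⟨h1, h2, _⟩; linarith
    rw [this]
    simp [clampI, max_eq_left, min_le_of_left_le h.le]
  · rcases le_or_gt t 1 with h2 | h2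
    · have : Iic t ∩ Icc (0:ℝ) 1 = Icc 0 t := by
        ext x; simp only [mem_inter_iff, mem_Iic, mem_Icc]
        constructor
        · rintro ⟨a, b, c⟩; exact ⟨b, a⟩
        · rintro ⟨a, b⟩; exact ⟨b, a, le_trans b h2⟩
      rw [this, Real.volume_Icc]
      congr 1
      rw [clampI, min_eq_left h2, max_eq_right h]
      ring
    · have : Iic t ∩ Icc (0:ℝ) 1 = Icc 0 1 := by
        ext x; simp only [mem_inter_iff, mem_Iic, mem_Icc]
        constructor
        · rintro ⟨a, b, c⟩; exact ⟨b, c⟩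
        · rintro ⟨a, b⟩; exact ⟨le_trans b h2.le, a, b⟩
      rw [this, Real.volume_Icc]
      congr 1
      rw [clampI, min_eq_right h2.le, max_eq_right zero_le_one]
      ring
lemma restrict_Ioi (t : ℝ) :
    (volume.restrict (Icc (0:ℝ) 1)) (Ioi t) = ENNReal.ofReal (1 - clampI t) := by
  rw [Measure.restrict_apply measurableSet_Ioi]
  rcases lt_or_ge t 0 with h | h
  · have : Ioi t ∩ Icc (0:ℝ) 1 = Icc 0 1 := by
      ext x; simp only [mem_inter_iff, mem_Ioi, mem_Icc]
      exact ⟨fun ⟨a, b, c⟩ => ⟨b, c⟩, fun ⟨a, b⟩ => ⟨lt_of_lt_of_le h a, a, b⟩⟩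
    rw [this, Real.volume_Icc]
    congr 1
    rw [clampI, max_eq_left (min_le_of_left_le h.le)]
  · rcases le_or_gt t 1 with h2 | h2
    · have : Ioi t ∩ Icc (0:ℝ) 1 = Ioc t 1 := by
        ext x; simp only [mem_inter_iff, mem_Ioi, mem_Icc, mem_Ioc]
        exact ⟨fun ⟨a, b, c⟩ => ⟨a, c⟩, fun ⟨a, b⟩ => ⟨a, le_trans h a.le, b⟩⟩
      rw [this, Real.volume_Ioc]
      congr 1
      rw [clampI, min_eq_left h2, max_eq_right h]
    · have : Ioi t ∩ Icc (0:ℝ) 1 = ∅ := by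
        ext x; simp only [mem_inter_iff, mem_Ioi, mem_Icc, mem_empty_iff_false, iff_false]
        intro ⟨a, b, c⟩; linarith
      rw [this]
      rw [measure_empty, eq_comm, ENNReal.ofReal_eq_zero, clampI,
        min_eq_right h2.le, max_eq_right zero_le_one]
      linarith

lemma betaCDF_eq {n r : ℕ} (h1 : 1 ≤ r) (hn : r ≤ n) (t : ℝ) :
    betaCDF n r t = binTail n r (clampI t) := by
  set p := clampI t with hp
  have hp0 : 0 ≤ p := (clampI_mem t).1
  have hp1 : p ≤ 1 := (clampI_mem t).2
  -- the block sets
  set S : Finset (Fin n) → Set (Fin n → ℝ) :=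
    fun A => Set.pi univ (fun i => if i ∈ A then Iic t else Ioi t) with hS
  set 𝒜 : Finset (Finset (Fin n)) :=
    Finset.univ.powerset.filter (fun A => r ≤ A.card) with h𝒜
  have hmem : ∀ (u : Fin n → ℝ) (A : Finset (Fin n)),
      u ∈ S A ↔ (Finset.univ.filter (fun i => u i ≤ t)) = A := by
    intro u A
    rw [hS]
    simp only [Set.mem_pi, mem_univ, forall_true_left]
    constructor
    · intro h
      ext i
      simp only [Finset.mem_filter, Finset.mem_univ, true_and]
      specialize h i
      by_cases hiA : i ∈ A
      · simp [hiA] at h; exact ⟨fun _ => hiA, fun _ => h⟩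
      · simp [hiA] at h
        exact ⟨fun hc => absurd hc (not_le.mpr h), fun hc => absurd hc hiA⟩
    · intro h i
      by_cases hiA : i ∈ A
      · simp only [hiA, if_true, mem_Iic]
        have : i ∈ Finset.univ.filter (fun i => u i ≤ t) := h ▸ hiA
        simpa using this
      · simp only [hiA, if_false, mem_Ioi]
        have : i ∉ Finset.univ.filter (fun i => u i ≤ t) := h ▸ hiA
        simpa using not_le.mp (by simpa using this)
  have hE : {u : Fin n → ℝ | orderStat u r ≤ t} = ⋃ A ∈ 𝒜, S A := by
    ext u
    simp only [mem_setOf_eq, mem_iUnion, exists_prop]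
    rw [orderStat_le_iff h1 hn]
    constructor
    · intro h
      refine ⟨Finset.univ.filter (fun i => u i ≤ t), ?_, (hmem u _).mpr rfl⟩
      rw [h𝒜]
      simp only [Finset.mem_filter, Finset.mem_powerset]
      exact ⟨Finset.subset_univ _, h⟩
    · rintro ⟨A, hA, hu⟩
      rw [(hmem u A).mp hu]
      rw [h𝒜] at hA
      simp only [Finset.mem_filter] at hA
      exact hA.2
  have hSmeas : ∀ A : Finset (Fin n), MeasurableSet (S A) := by
    intro A
    apply MeasurableSet.univ_pi
    intro i
    by_cases hiA : i ∈ A <;> simp [hiA, measurableSet_Iic, measurableSet_Ioi]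
  have hdisj : (↑𝒜 : Set (Finset (Fin n))).PairwiseDisjoint S := by
    intro A _ B _ hAB
    rw [Function.onFun, Set.disjoint_left]
    intro u huA huB
    exact hAB ((hmem u A).mp huA ▸ ((hmem u B).mp huB).symm ▸ rfl)
  have hSval : ∀ A : Finset (Fin n),
      unifPi n (S A) = ENNReal.ofReal (p ^ A.card * (1 - p) ^ (n - A.card)) := by
    intro A
    rw [hS, unifPi, Measure.pi_pi]
    have : ∀ i : Fin n, (volume.restrict (Icc (0:ℝ) 1)) (if i ∈ A then Iic t else Ioi t)
        = if i ∈ A then ENNReal.ofReal p else ENNReal.ofReal (1 - p) := by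
      intro i
      by_cases hiA : i ∈ A
      · rw [if_pos hiA, if_pos hiA, restrict_Iic]
      · rw [if_neg hiA, if_neg hiA, restrict_Ioi]
    rw [Finset.prod_congr rfl (fun i _ => this i)]
    rw [← Finset.prod_mul_prod_compl A]
    rw [Finset.prod_congr rfl (fun i (hi : i ∈ A) => if_pos hi),
      Finset.prod_congr rfl (fun i (hi : i ∈ Aᶜ) => if_neg (Finset.mem_compl.mp hi))]
    rw [Finset.prod_const, Finset.prod_const, Finset.card_compl, Fintype.card_fin]
    rw [← ENNReal.ofReal_pow hp0, ← ENNReal.ofReal_pow (by linarith : (0:ℝ) ≤ 1 - p),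
      ← ENNReal.ofReal_mul (pow_nonneg hp0 _)]
  -- now the measure of the union
  have hmain : unifPi n {u : Fin n → ℝ | orderStat u r ≤ t}
      = ENNReal.ofReal (binTail n r p) := by
    rw [hE, measure_biUnion_finset hdisj (fun A _ => hSmeas A)]
    rw [Finset.sum_congr rfl (fun A _ => hSval A)]
    have hsplit : 𝒜 = (Finset.Icc r n).biUnion (fun k => Finset.powersetCard k Finset.univ) := by
      ext A
      rw [h𝒜]
      simp only [Finset.mem_filter, Finset.mem_powerset, Finset.mem_biUnion, Finset.mem_Icc,
        Finset.mem_powersetCard]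
      constructor
      · rintro ⟨hsub, hcard⟩
        exact ⟨A.card, ⟨hcard, Finset.card_le_univ A |>.trans (by simp)⟩, hsub, rfl⟩
      · rintro ⟨k, ⟨hk1, hk2⟩, hsub, hcard⟩
        exact ⟨hsub, hcard ▸ hk1⟩
    rw [hsplit, Finset.sum_biUnion]
    · rw [binTail, ENNReal.ofReal_sum_of_nonneg (fun k _ => mul_nonneg
        (mul_nonneg (Nat.cast_nonneg _) (pow_nonneg hp0 _)) (pow_nonneg (by linarith) _))]
      apply Finset.sum_congr rfl
      intro k hk
      have hterm : ∀ A ∈ Finset.powersetCard k (Finset.univ : Finset (Fin n)),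
          ENNReal.ofReal (p ^ A.card * (1 - p) ^ (n - A.card))
          = ENNReal.ofReal (p ^ k * (1 - p) ^ (n - k)) := by
        intro A hA
        rw [(Finset.mem_powersetCard.mp hA).2]
      rw [Finset.sum_congr rfl hterm, Finset.sum_const, Finset.card_powersetCard]
      simp only [Finset.card_univ, Fintype.card_fin]
      rw [nsmul_eq_mul, ← ENNReal.ofReal_natCast, ← ENNReal.ofReal_mul (by positivity)]
      congr 1
      ring
    · intro a ha b hb hab
      rw [Function.onFun, Finset.disjoint_left]
      intro A hA hA2
      exact hab ((Finset.mem_powersetCard.mp hA).2 ▸ ((Finset.mem_powersetCard.mp hA2).2).symm ▸ rfl)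
  -- conclude
  have hpre : (fun u : Fin n → ℝ => orderStat u r) ⁻¹' (Iic t)
      = {u : Fin n → ℝ | orderStat u r ≤ t} := rfl
  rw [betaCDF, betaOS, Measure.map_apply (measurable_orderStat h1 hn) measurableSet_Iic,
    hpre, hmain, ENNReal.toReal_ofReal]
  apply Finset.sum_nonneg
  intro k _
  exact mul_nonneg (mul_nonneg (Nat.cast_nonneg _) (pow_nonneg hp0 _))
    (pow_nonneg (by linarith) _)


lemma hoeffding_scalar {q l : ℝ} (hq0 : 0 ≤ q) (hq1 : q ≤ 1) (hl : 0 ≤ l) :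
    q * Real.exp (-l) + (1 - q) ≤ Real.exp (-l * q + l ^ 2 / 8) := by
  set g : ℝ → ℝ := fun x => 1 - q + q * Real.exp (-x) with hg
  have hgpos : ∀ x, 0 < g x := by
    intro x
    rcases eq_or_lt_of_le hq0 with h | h
    · simp [hg, ← h]
    · have : 0 < q * Real.exp (-x) := mul_pos h (Real.exp_pos _)
      simp only [hg]; nlinarith
  have hgd : ∀ x, HasDerivAt g (-(q * Real.exp (-x))) x := by
    intro x
    have h1 : HasDerivAt (fun x : ℝ => -x) (-1) x := (hasDerivAt_id x).neg
    have h2 : HasDerivAt (fun x : ℝ => Real.exp (-x)) (Real.exp (-x) * (-1)) x :=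
      (Real.hasDerivAt_exp (-x)).comp x h1
    have h3 : HasDerivAt (fun x : ℝ => q * Real.exp (-x)) (q * (Real.exp (-x) * (-1))) x :=
      h2.const_mul q
    have h4 := (h3.const_add (1 - q))
    refine h4.congr_deriv (Eq.symm ?_)
    ring
  set ψ : ℝ → ℝ := fun x => q - q * Real.exp (-x) / g x - x / 4 with hψ
  have hψd : ∀ x, HasDerivAt ψ
      ((q * Real.exp (-x)) * (1 - q) / (g x) ^ 2 - 1 / 4) x := by
    intro x
    have h1 : HasDerivAt (fun x : ℝ => -x) (-1) x := (hasDerivAt_id x).neg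
    have h2 : HasDerivAt (fun x : ℝ => q * Real.exp (-x)) (-(q * Real.exp (-x))) x := by
      have := ((Real.hasDerivAt_exp (-x)).comp x h1).const_mul q
      refine this.congr_deriv (Eq.symm ?_); ring
    have hdiv : HasDerivAt (fun x : ℝ => q * Real.exp (-x) / g x)
        ((-(q * Real.exp (-x)) * g x - q * Real.exp (-x) * (-(q * Real.exp (-x)))) / (g x) ^ 2) x :=
      h2.div (hgd x) (ne_of_gt (hgpos x))
    have h5 : HasDerivAt (fun x : ℝ => x / 4) (1 / 4 : ℝ) x := by
      simpa using (hasDerivAt_id x).div_const 4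
    have := ((hdiv.const_sub q).sub h5)
    refine this.congr_deriv (Eq.symm ?_)
    have hgx : g x = 1 - q + q * Real.exp (-x) := rfl
    field_simp
    ring
  have hψ0 : ψ 0 = 0 := by
    simp only [hψ, hg]
    norm_num
  have hψ_le : ∀ x ∈ Ici (0:ℝ), ψ x ≤ 0 := by
    have hanti : AntitoneOn ψ (Ici 0) := by
      apply antitoneOn_of_deriv_nonpos (convex_Ici 0)
      · exact Continuous.continuousOn (continuous_iff_continuousAt.mpr
          (fun x => (hψd x).differentiableAt.continuousAt))
      · intro x _
        exact (hψd x).differentiableAt.differentiableWithinAt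
      · intro x _
        rw [(hψd x).deriv]
        have h1 : 0 ≤ q * Real.exp (-x) := mul_nonneg hq0 (Real.exp_pos _).le
        rw [sub_nonpos, div_le_iff₀ (pow_pos (hgpos x) 2)]
        show q * Real.exp (-x) * (1 - q) ≤ 1 / 4 * (1 - q + q * Real.exp (-x)) ^ 2
        nlinarith [sq_nonneg (q * Real.exp (-x) - (1 - q))]
    intro x hx
    calc ψ x ≤ ψ 0 := hanti (by norm_num) hx hx
      _ = 0 := hψ0
  set φ : ℝ → ℝ := fun x => Real.log (g x) + x * q - x ^ 2 / 8 with hφ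
  have hφd : ∀ x, HasDerivAt φ (ψ x) x := by
    intro x
    have hlog : HasDerivAt (fun x => Real.log (g x)) (-(q * Real.exp (-x)) / g x) x :=
      (hgd x).log (ne_of_gt (hgpos x))
    have h2 : HasDerivAt (fun x : ℝ => x * q) q x := by
      simpa using (hasDerivAt_id x).mul_const q
    have h3 : HasDerivAt (fun x : ℝ => x ^ 2 / 8) (2 * x / 8) x := by
      simpa using ((hasDerivAt_pow 2 x)).div_const 8
    have := (hlog.add h2).sub h3
    refine this.congr_deriv (Eq.symm ?_)
    simp only [hψ]
    field_simp
    ring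
  have hφ0 : φ 0 = 0 := by
    simp only [hφ, hg]
    norm_num
  have hφl : φ l ≤ 0 := by
    have hanti : AntitoneOn φ (Ici 0) := by
      apply antitoneOn_of_deriv_nonpos (convex_Ici 0)
      · exact Continuous.continuousOn (continuous_iff_continuousAt.mpr
          (fun x => (hφd x).differentiableAt.continuousAt))
      · intro x _
        exact (hφd x).differentiableAt.differentiableWithinAt
      · intro x hx
        rw [(hφd x).deriv]
        exact hψ_le x (interior_subset hx)
    calc φ l ≤ φ 0 := hanti self_mem_Ici hl hl
      _ = 0 := hφ0
  have hfinal : Real.log (g l) ≤ -l * q + l ^ 2 / 8 := by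
    simp only [hφ] at hφl
    nlinarith
  have : g l ≤ Real.exp (-l * q + l ^ 2 / 8) := by
    rw [← Real.exp_log (hgpos l)]
    exact Real.exp_le_exp.mpr hfinal
  calc q * Real.exp (-l) + (1 - q) = g l := by rw [hg]; ring
    _ ≤ _ := this

noncomputable def lowTail (n k : ℕ) (p : ℝ) : ℝ :=
  ∑ j ∈ Finset.range (k + 1), (n.choose j : ℝ) * p ^ j * (1 - p) ^ (n - j)

lemma binomial_sum_one (n : ℕ) (p : ℝ) :
    ∑ j ∈ Finset.range (n + 1), (n.choose j : ℝ) * p ^ j * (1 - p) ^ (n - j) = 1 := by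
  have h := add_pow p (1 - p) n
  simp only [add_sub_cancel, one_pow] at h
  calc ∑ j ∈ Finset.range (n + 1), (n.choose j : ℝ) * p ^ j * (1 - p) ^ (n - j)
      = ∑ m ∈ Finset.range (n + 1), p ^ m * (1 - p) ^ (n - m) * (n.choose m : ℝ) := by
        apply Finset.sum_congr rfl; intro j _; ring
    _ = 1 := h.symm

lemma lowTail_add_binTail {n r : ℕ} (h1 : 1 ≤ r) (hn : r ≤ n) (p : ℝ) :
    lowTail n (r - 1) p + binTail n r p = 1 := by
  have hr : r - 1 + 1 = r := Nat.succ_pred_eq_of_pos h1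
  have hone := binomial_sum_one n p
  have hsplit : Finset.range (n + 1) = Finset.range r ∪ Finset.Icc r n := by
    ext a
    simp only [Finset.mem_union, Finset.mem_range, Finset.mem_Icc]
    omega
  have hdisj : Disjoint (Finset.range r) (Finset.Icc r n) := by
    rw [Finset.disjoint_left]
    intro a ha hb
    rw [Finset.mem_range] at ha
    rw [Finset.mem_Icc] at hb
    omega
  rw [hsplit, Finset.sum_union hdisj] at hone
  rw [lowTail, binTail, hr]
  exact hone

lemma chernoff_low {n k : ℕ} (hn : 1 ≤ n) (hkn : k ≤ n) {p : ℝ} (hp0 : 0 ≤ p) (hp1 : p ≤ 1)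
    (hs : (k : ℝ) / n ≤ p) :
    lowTail n k p ≤ Real.exp (-2 * n * (p - k / n) ^ 2) := by
  have hnpos : (0:ℝ) < n := by exact_mod_cast hn
  set s : ℝ := p - k / n with hsdef
  have hs0 : 0 ≤ s := by simp [hsdef]; linarith
  set lam : ℝ := 4 * s with hlam
  have hlam0 : 0 ≤ lam := by positivity
  have hq1 : 0 ≤ 1 - p := by linarith
  have step1 : lowTail n k p
      ≤ ∑ j ∈ Finset.range (k + 1),
          Real.exp (lam * ((k : ℝ) - j)) * ((n.choose j : ℝ) * p ^ j * (1 - p) ^ (n - j)) := by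
    apply Finset.sum_le_sum
    intro j hj
    rw [Finset.mem_range] at hj
    have hkj : (0:ℝ) ≤ (k : ℝ) - j := by
      have : j ≤ k := by omega
      have := (Nat.cast_le (α := ℝ)).mpr this
      linarith
    have hexp : 1 ≤ Real.exp (lam * ((k:ℝ) - j)) := by
      rw [← Real.exp_zero]
      exact Real.exp_le_exp.mpr (by positivity)
    nlinarith [mul_nonneg (mul_nonneg (Nat.cast_nonneg (n.choose j) : (0:ℝ) ≤ _)
      (pow_nonneg hp0 j)) (pow_nonneg hq1 (n - j))]
  have step2 : ∑ j ∈ Finset.range (k + 1),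
          Real.exp (lam * ((k : ℝ) - j)) * ((n.choose j : ℝ) * p ^ j * (1 - p) ^ (n - j))
      ≤ ∑ j ∈ Finset.range (n + 1),
          Real.exp (lam * ((k : ℝ) - j)) * ((n.choose j : ℝ) * p ^ j * (1 - p) ^ (n - j)) := by
    apply Finset.sum_le_sum_of_subset_of_nonneg
    · exact Finset.range_subset_range.mpr (by omega)
    · intro j _ _
      have : (0:ℝ) ≤ (n.choose j : ℝ) * p ^ j * (1 - p) ^ (n - j) := by
        exact mul_nonneg (mul_nonneg (Nat.cast_nonneg _) (pow_nonneg hp0 _)) (pow_nonneg hq1 _)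
      positivity
  have step3 : ∑ j ∈ Finset.range (n + 1),
          Real.exp (lam * ((k : ℝ) - j)) * ((n.choose j : ℝ) * p ^ j * (1 - p) ^ (n - j))
      = Real.exp (lam * k) *
          ∑ j ∈ Finset.range (n + 1),
            (n.choose j : ℝ) * (p * Real.exp (-lam)) ^ j * (1 - p) ^ (n - j) := by
    rw [Finset.mul_sum]
    apply Finset.sum_congr rfl
    intro j _
    rw [mul_pow, ← Real.exp_nat_mul]
    rw [show lam * ((k:ℝ) - j) = lam * k + (j : ℝ) * (-lam) by ring]
    rw [Real.exp_add]
    ring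
  have step4 : ∑ j ∈ Finset.range (n + 1),
          (n.choose j : ℝ) * (p * Real.exp (-lam)) ^ j * (1 - p) ^ (n - j)
      = (p * Real.exp (-lam) + (1 - p)) ^ n := by
    have := add_pow (p * Real.exp (-lam)) (1 - p) n
    rw [this]
    apply Finset.sum_congr rfl
    intro j _
    ring
  have step5 : (p * Real.exp (-lam) + (1 - p)) ^ n
      ≤ Real.exp ((n : ℝ) * (-lam * p + lam ^ 2 / 8)) := by
    have hbase : 0 ≤ p * Real.exp (-lam) + (1 - p) := by positivity
    have := pow_le_pow_left₀ hbase (hoeffding_scalar hp0 hp1 hlam0) n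
    calc (p * Real.exp (-lam) + (1 - p)) ^ n
        ≤ (Real.exp (-lam * p + lam ^ 2 / 8)) ^ n := this
      _ = Real.exp ((n : ℝ) * (-lam * p + lam ^ 2 / 8)) := by
          rw [← Real.exp_nat_mul]
  have hkcast : (k : ℝ) = n * p - n * s := by
    rw [hsdef]
    field_simp
    ring
  calc lowTail n k p
      ≤ Real.exp (lam * k) *
          ∑ j ∈ Finset.range (n + 1),
            (n.choose j : ℝ) * (p * Real.exp (-lam)) ^ j * (1 - p) ^ (n - j) := by
        rw [← step3]; exact le_trans step1 step2
    _ ≤ Real.exp (lam * k) * Real.exp ((n : ℝ) * (-lam * p + lam ^ 2 / 8)) := by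
        rw [step4] at *
        exact mul_le_mul_of_nonneg_left step5 (Real.exp_pos _).le
    _ = Real.exp (lam * k + (n : ℝ) * (-lam * p + lam ^ 2 / 8)) := by rw [← Real.exp_add]
    _ = Real.exp (-2 * n * s ^ 2) := by
        congr 1
        rw [hkcast, hlam]
        ring

lemma binTail_eq_lowTail {n r : ℕ} (hrn : r ≤ n) (p : ℝ) :
    binTail n r p = lowTail n (n - r) (1 - p) := by
  rw [binTail, lowTail]
  rw [show (1 : ℝ) - (1 - p) = p by ring]
  apply Finset.sum_nbij' (fun k => n - k) (fun j => n - j)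
  · intro k hk
    rw [Finset.mem_Icc] at hk
    rw [Finset.mem_range]
    omega
  · intro j hj
    rw [Finset.mem_range] at hj
    rw [Finset.mem_Icc]
    omega
  · intro k hk
    rw [Finset.mem_Icc] at hk
    omega
  · intro j hj
    rw [Finset.mem_range] at hj
    omega
  · intro k hk
    rw [Finset.mem_Icc] at hk
    rw [Nat.choose_symm hk.2]
    rw [show n - (n - k) = k by omega]
    ring


/-- auxiliary: `D n k p = n * C(n-1, k-1) * p^(k-1) * (1-p)^(n-k)` -/
noncomputable def Dfun (n k : ℕ) (p : ℝ) : ℝ :=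
  (n : ℝ) * ((n - 1).choose (k - 1) : ℝ) * p ^ (k - 1) * (1 - p) ^ (n - k)

lemma hasDerivAt_one_sub_pow (m : ℕ) (p : ℝ) :
    HasDerivAt (fun q : ℝ => (1 - q) ^ m) (-((m : ℝ) * (1 - p) ^ (m - 1))) p := by
  have h1 : HasDerivAt (fun q : ℝ => 1 - q) (-1) p := by
    simpa using ((hasDerivAt_id p).const_sub 1)
  have := (hasDerivAt_pow m (1 - p)).comp p h1
  refine this.congr_deriv (Eq.symm ?_)
  ring

lemma cast_mul_choose₁ {n k : ℕ} (h1 : 1 ≤ k) (hn : k ≤ n) :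
    (k : ℝ) * (n.choose k : ℝ) = (n : ℝ) * ((n - 1).choose (k - 1) : ℝ) := by
  have hnat : k * n.choose k = n * (n - 1).choose (k - 1) := by
    obtain ⟨n', rfl⟩ : ∃ n', n = n' + 1 := ⟨n - 1, by omega⟩
    obtain ⟨k', rfl⟩ : ∃ k', k = k' + 1 := ⟨k - 1, by omega⟩
    simp only [Nat.add_sub_cancel]
    rw [mul_comm (k' + 1) _]
    exact (Nat.add_one_mul_choose_eq n' k').symm
  exact_mod_cast congrArg (fun x : ℕ => (x : ℝ)) hnat

lemma cast_mul_choose₂ {n k : ℕ} (hn : k ≤ n) :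
    ((n - k : ℕ) : ℝ) * (n.choose k : ℝ) = (n : ℝ) * ((n - 1).choose k : ℝ) := by
  have hnat : (n - k) * n.choose k = n * (n - 1).choose k := by
    rcases Nat.eq_zero_or_pos n with rfl | hnpos
    · simp
    obtain ⟨n', rfl⟩ : ∃ n', n = n' + 1 := ⟨n - 1, by omega⟩
    rcases Nat.lt_or_ge k (n' + 1) with hk | hk
    · have h1 : (n' + 1).choose (k + 1) * (k + 1) = (n' + 1).choose k * (n' + 1 - k) :=
        Nat.choose_succ_right_eq (n' + 1) k
      have h2 : (n' + 1) * n'.choose k = (n' + 1).choose (k + 1) * (k + 1) :=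
        Nat.add_one_mul_choose_eq n' k
      simp only [Nat.add_sub_cancel]
      rw [mul_comm, ← h1, ← h2]
    · have hk' : k = n' + 1 := by omega
      subst hk'
      simp [Nat.choose_eq_zero_of_lt (by omega : n' < n' + 1)]
  exact_mod_cast congrArg (fun x : ℕ => (x : ℝ)) hnat

lemma hasDerivAt_term {n k : ℕ} (h1 : 1 ≤ k) (hn : k ≤ n) (p : ℝ) :
    HasDerivAt (fun q : ℝ => (n.choose k : ℝ) * q ^ k * (1 - q) ^ (n - k))
      (Dfun n k p - Dfun n (k + 1) p) p := by
  have hpow : HasDerivAt (fun q : ℝ => (n.choose k : ℝ) * q ^ k)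
      ((n.choose k : ℝ) * ((k : ℝ) * p ^ (k - 1))) p := (hasDerivAt_pow k p).const_mul _
  have h := hpow.mul (hasDerivAt_one_sub_pow (n - k) p)
  refine h.congr_deriv (Eq.symm ?_)
  rw [Dfun, Dfun]
  simp only [Nat.add_sub_cancel]
  have e1 : (n : ℝ) * ((n - 1).choose (k - 1) : ℝ) = (k : ℝ) * (n.choose k : ℝ) :=
    (cast_mul_choose₁ h1 hn).symm
  have e2 : (n : ℝ) * ((n - 1).choose k : ℝ) = ((n - k : ℕ) : ℝ) * (n.choose k : ℝ) :=
    (cast_mul_choose₂ hn).symm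
  rw [e1, e2]
  have e3 : p ^ k = p ^ (k - 1) * p := by
    rw [← pow_succ]
    congr 1
    omega
  have e4 : n - (k + 1) = (n - k) - 1 := by omega
  rw [e4, e3]
  ring

lemma hasDerivAt_binTail {n r : ℕ} (h1 : 1 ≤ r) (hn : r ≤ n) (p : ℝ) :
    HasDerivAt (binTail n r) (Dfun n r p) p := by
  have hsum : HasDerivAt (fun q => ∑ k ∈ Finset.Icc r n,
      (n.choose k : ℝ) * q ^ k * (1 - q) ^ (n - k))
      (∑ k ∈ Finset.Icc r n, (Dfun n k p - Dfun n (k + 1) p)) p := by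
    apply HasDerivAt.fun_sum
    intro k hk
    rw [Finset.mem_Icc] at hk
    exact hasDerivAt_term (by omega) hk.2 p
  have htel : ∑ k ∈ Finset.Icc r n, (Dfun n k p - Dfun n (k + 1) p) = Dfun n r p := by
    rw [← Finset.Ico_add_one_right_eq_Icc, Finset.sum_Ico_eq_sum_range]
    have hre : ∀ i, Dfun n (r + i) p - Dfun n (r + i + 1) p
        = (fun j => Dfun n (r + j) p) i - (fun j => Dfun n (r + j) p) (i + 1) := by
      intro i
      simp only []
      rw [show r + (i + 1) = r + i + 1 by omega]
    rw [Finset.sum_congr rfl (fun i _ => hre i), Finset.sum_range_sub' (fun j => Dfun n (r + j) p)]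
    have hz : Dfun n (r + (n + 1 - r)) p = 0 := by
      rw [show r + (n + 1 - r) = n + 1 by omega, Dfun]
      rw [Nat.choose_eq_zero_of_lt (by omega : n - 1 < n + 1 - 1)]
      simp
    simp only [add_zero] at *
    rw [hz]
    simp
  rw [← htel]
  exact hsum

lemma continuous_binTail (n r : ℕ) : Continuous (binTail n r) := by
  apply continuous_finset_sum
  intro k _
  exact (continuous_const.mul (continuous_pow k)).mul
    ((continuous_const.sub continuous_id).pow (n - k))

lemma monotoneOn_binTail {n r : ℕ} (h1 : 1 ≤ r) (hn : r ≤ n) :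
    MonotoneOn (binTail n r) (Icc 0 1) := by
  apply monotoneOn_of_deriv_nonneg (convex_Icc 0 1) (continuous_binTail n r).continuousOn
  · intro p _
    exact (hasDerivAt_binTail h1 hn p).differentiableAt.differentiableWithinAt
  · intro p hp
    rw [interior_Icc] at hp
    rw [(hasDerivAt_binTail h1 hn p).deriv, Dfun]
    have h0 : (0:ℝ) ≤ p := hp.1.le
    have h2 : (0:ℝ) ≤ 1 - p := by linarith [hp.2]
    positivity

lemma hasDerivAt_cpow (c : ℝ) (i j : ℕ) (p : ℝ) :
    HasDerivAt (fun q : ℝ => c * q ^ i * (1 - q) ^ j)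
      (c * ((i : ℝ) * p ^ (i - 1)) * (1 - p) ^ j
        - c * p ^ i * ((j : ℝ) * (1 - p) ^ (j - 1))) p := by
  have h := ((hasDerivAt_pow i p).const_mul c).mul (hasDerivAt_one_sub_pow j p)
  refine h.congr_deriv (Eq.symm ?_)
  ring

lemma convexOn_Icc_self (f : ℝ → ℝ) (a : ℝ) : ConvexOn ℝ (Icc a a) f := by
  rw [Icc_self]
  refine ⟨convex_singleton a, ?_⟩
  intro x hx y hy s t hs ht hst
  rw [mem_singleton_iff.mp hx, mem_singleton_iff.mp hy, ← add_smul, hst, one_smul]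
  have h2 : s • f a + t • f a = f a := by
    rw [smul_eq_mul, smul_eq_mul, ← add_mul, hst, one_mul]
  rw [h2]

lemma concaveOn_Icc_self (f : ℝ → ℝ) (a : ℝ) : ConcaveOn ℝ (Icc a a) f := by
  rw [Icc_self]
  refine ⟨convex_singleton a, ?_⟩
  intro x hx y hy s t hs ht hst
  rw [mem_singleton_iff.mp hx, mem_singleton_iff.mp hy, ← add_smul, hst, one_smul]
  rw [← add_smul, hst, one_smul]

lemma exists_mode {n r : ℕ} (h1 : 1 ≤ r) (hn : r ≤ n) :
    ∃ m ∈ Icc (0:ℝ) 1, ConvexOn ℝ (Icc 0 m) (binTail n r)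
      ∧ ConcaveOn ℝ (Icc m 1) (binTail n r) := by
  have hcont := (continuous_binTail n r).continuousOn (s := Icc (0:ℝ) 1)
  have hderiv : ∀ p, deriv (binTail n r) p = Dfun n r p :=
    fun p => (hasDerivAt_binTail h1 hn p).deriv
  have hdiff : ∀ s : Set ℝ, DifferentiableOn ℝ (binTail n r) s :=
    fun s p _ => (hasDerivAt_binTail h1 hn p).differentiableAt.differentiableWithinAt
  have hCnonneg : (0:ℝ) ≤ (n : ℝ) * ((n-1).choose (r-1) : ℝ) := by positivity
  rcases eq_or_lt_of_le h1 with hr1 | hr1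
  · -- r = 1 : concave on [0,1]
    refine ⟨0, by constructor <;> norm_num, convexOn_Icc_self _ 0, ?_⟩
    apply AntitoneOn.concaveOn_of_deriv (convex_Icc 0 1)
      ((continuous_binTail n r).continuousOn) (fun p hp => (hdiff _ p hp))
    intro p hp q hq hpq
    rw [interior_Icc] at hp hq
    rw [hderiv, hderiv, Dfun, Dfun, ← hr1]
    simp only [Nat.sub_self, pow_zero, mul_one]
    apply mul_le_mul_of_nonneg_left _ (by positivity)
    exact pow_le_pow_left₀ (by linarith [hq.2]) (by linarith) _
  · rcases eq_or_lt_of_le hn with hrn | hrn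
    · -- r = n : convex on [0,1]
      refine ⟨1, by constructor <;> norm_num, ?_, concaveOn_Icc_self _ 1⟩
      apply MonotoneOn.convexOn_of_deriv (convex_Icc 0 1)
        ((continuous_binTail n r).continuousOn) (fun p hp => (hdiff _ p hp))
      intro p hp q hq hpq
      rw [interior_Icc] at hp hq
      rw [hderiv, hderiv, Dfun, Dfun, hrn]
      simp only [Nat.sub_self, pow_zero, mul_one]
      apply mul_le_mul_of_nonneg_left _ (by positivity)
      exact pow_le_pow_left₀ hp.1.le hpq _
    · -- 1 < r < n
      set i : ℕ := r - 1 with hi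
      set j : ℕ := n - r with hj
      have hi1 : 1 ≤ i := by omega
      have hj1 : 1 ≤ j := by omega
      set m : ℝ := (i : ℝ) / ((i : ℝ) + (j : ℝ)) with hm
      have hij : (0:ℝ) < (i : ℝ) + (j : ℝ) := by positivity
      have hm0 : 0 ≤ m := by positivity
      have hm1 : m ≤ 1 := by
        rw [hm, div_le_one hij]
        have : (0:ℝ) ≤ (j : ℝ) := Nat.cast_nonneg _
        linarith
      have hDfun : ∀ p, Dfun n r p
          = ((n : ℝ) * ((n-1).choose (r-1) : ℝ)) * p ^ i * (1 - p) ^ j := by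
        intro p
        rw [Dfun, hi, hj]
      have hsign : ∀ p, 0 < p → p < 1 →
          deriv (fun q => ((n : ℝ) * ((n-1).choose (r-1) : ℝ)) * q ^ i * (1 - q) ^ j) p
          = ((n : ℝ) * ((n-1).choose (r-1) : ℝ)) * (p ^ (i-1) * (1 - p) ^ (j-1))
            * ((i : ℝ) * (1 - p) - (j : ℝ) * p) := by
        intro p hp0 hp1
        rw [(hasDerivAt_cpow _ i j p).deriv]
        have e3 : p ^ i = p ^ (i-1) * p := by
          rw [← pow_succ]; congr 1; omega
        have e4 : (1-p) ^ j = (1-p) ^ (j-1) * (1-p) := by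
          rw [← pow_succ]; congr 1; omega
        rw [e3, e4]
        ring
      -- monotone part of the density
      have hmono : MonotoneOn (fun p => Dfun n r p) (Icc 0 m) ∧
          AntitoneOn (fun p => Dfun n r p) (Icc m 1) := by
        constructor
        · have : MonotoneOn (fun q => ((n : ℝ) * ((n-1).choose (r-1) : ℝ)) * q ^ i * (1 - q) ^ j)
              (Icc 0 m) := by
            apply monotoneOn_of_deriv_nonneg (convex_Icc 0 m)
            · exact Continuous.continuousOn (by
                exact (continuous_const.mul (continuous_pow i)).mul
                  ((continuous_const.sub continuous_id).pow j))
            · exact fun p _ => (hasDerivAt_cpow _ i j p).differentiableAt.differentiableWithinAt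
            · intro p hp
              rw [interior_Icc] at hp
              have hp0 : 0 < p := hp.1
              have hpm : p < m := hp.2
              have hp1 : p < 1 := lt_of_lt_of_le hpm hm1
              rw [hsign p hp0 hp1]
              have hkey : 0 ≤ (i : ℝ) * (1 - p) - (j : ℝ) * p := by
                nlinarith [(lt_div_iff₀ hij).mp hpm]
              have h1p : (0:ℝ) ≤ 1 - p := by linarith
              positivity
          intro a ha b hb hab
          show Dfun n r a ≤ Dfun n r b
          rw [hDfun, hDfun]
          exact this ha hb hab
        · have : AntitoneOn (fun q => ((n : ℝ) * ((n-1).choose (r-1) : ℝ)) * q ^ i * (1 - q) ^ j)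
              (Icc m 1) := by
            apply antitoneOn_of_deriv_nonpos (convex_Icc m 1)
            · exact Continuous.continuousOn (by
                exact (continuous_const.mul (continuous_pow i)).mul
                  ((continuous_const.sub continuous_id).pow j))
            · exact fun p _ => (hasDerivAt_cpow _ i j p).differentiableAt.differentiableWithinAt
            · intro p hp
              rw [interior_Icc] at hp
              have hpm : m < p := hp.1
              have hp1 : p < 1 := hp.2
              have hp0 : 0 < p := lt_of_le_of_lt hm0 hpm
              rw [hsign p hp0 hp1]
              have hkey : (i : ℝ) * (1 - p) - (j : ℝ) * p ≤ 0 := by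
                nlinarith [(div_lt_iff₀ hij).mp hpm]
              have h1p : (0:ℝ) ≤ 1 - p := by linarith
              have hfac : (0:ℝ) ≤ ((n : ℝ) * ((n-1).choose (r-1) : ℝ))
                  * (p ^ (i-1) * (1 - p) ^ (j-1)) := by positivity
              exact mul_nonpos_of_nonneg_of_nonpos hfac hkey
          intro a ha b hb hab
          show Dfun n r b ≤ Dfun n r a
          rw [hDfun, hDfun]
          exact this ha hb hab
      refine ⟨m, ⟨hm0, hm1⟩, ?_, ?_⟩
      · apply MonotoneOn.convexOn_of_deriv (convex_Icc 0 m)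
          ((continuous_binTail n r).continuousOn) (fun p hp => (hdiff _ p hp))
        intro a ha b hb hab
        rw [interior_Icc] at ha hb
        rw [hderiv, hderiv]
        exact hmono.1 (Ioo_subset_Icc_self ha) (Ioo_subset_Icc_self hb) hab
      · apply AntitoneOn.concaveOn_of_deriv (convex_Icc m 1)
          ((continuous_binTail n r).continuousOn) (fun p hp => (hdiff _ p hp))
        intro a ha b hb hab
        rw [interior_Icc] at ha hb
        rw [hderiv, hderiv]
        exact hmono.2 (Ioo_subset_Icc_self ha) (Ioo_subset_Icc_self hb) hab


noncomputable def betaCDF' (n r : ℕ) (t : ℝ) : ℝ := binTail n r (clampI t)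

section Quantile
variable {n r : ℕ} (h1 : 1 ≤ r) (hn : r ≤ n)

lemma clampI_mem' (t : ℝ) : clampI t ∈ Icc (0:ℝ) 1 := by
  constructor
  · exact le_max_left _ _
  · rw [clampI]; simp [le_min_iff]

lemma clampI_monotone : Monotone clampI := by
  intro s t hst
  exact max_le_max (le_refl 0) (min_le_min hst (le_refl 1))

lemma clampI_of_mem {t : ℝ} (ht : t ∈ Icc (0:ℝ) 1) : clampI t = t := by
  rw [clampI, min_eq_left ht.2, max_eq_right ht.1]

lemma clampI_of_nonpos {t : ℝ} (ht : t ≤ 0) : clampI t = 0 := by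
  rw [clampI, max_eq_left]
  exact min_le_of_left_le ht

lemma clampI_of_one_le {t : ℝ} (ht : 1 ≤ t) : clampI t = 1 := by
  rw [clampI, min_eq_right ht, max_eq_right zero_le_one]

include h1 in
lemma binTail_zero : binTail n r 0 = 0 := by
  rw [binTail]
  apply Finset.sum_eq_zero
  intro k hk
  rw [Finset.mem_Icc] at hk
  rw [zero_pow (by omega)]
  ring

include h1 hn in
lemma binTail_one : binTail n r 1 = 1 := by
  rw [binTail]
  rw [Finset.sum_eq_single n]
  · simp
  · intro k hk hkn
    rw [Finset.mem_Icc] at hk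
    rw [show (1:ℝ) - 1 = 0 by ring, zero_pow (by omega)]
    ring
  · intro h
    rw [Finset.mem_Icc] at h
    omega

include h1 hn in
lemma monotone_betaCDF' : Monotone (betaCDF' n r) := by
  intro s t hst
  exact monotoneOn_binTail h1 hn (clampI_mem' s) (clampI_mem' t) (clampI_monotone hst)

lemma continuous_betaCDF' : Continuous (betaCDF' n r) := by
  apply (continuous_binTail n r).comp
  apply Continuous.max continuous_const
  exact Continuous.min continuous_id continuous_const

-- basic quantile properties, for p ∈ (0,1)
variable {p : ℝ} (hp0 : 0 < p) (hp1 : p < 1)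

include h1 hn hp1 in
lemma quantile_set_nonempty : {x | p ≤ betaCDF' n r x}.Nonempty := by
  refine ⟨1, ?_⟩
  rw [mem_setOf_eq, betaCDF', clampI_of_one_le (le_refl 1), binTail_one h1 hn]
  exact hp1.le

include h1 hp0 in
lemma quantile_set_bddBelow : BddBelow {x | p ≤ betaCDF' n r x} := by
  refine ⟨0, ?_⟩
  intro x hx
  rw [mem_setOf_eq] at hx
  by_contra hneg
  push_neg at hneg
  rw [betaCDF', clampI_of_nonpos hneg.le, binTail_zero h1] at hx
  linarith

include h1 hn hp0 hp1 in
lemma quantile_mem_Icc : genInv (betaCDF' n r) p ∈ Icc (0:ℝ) 1 := by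
  constructor
  · apply le_csInf (quantile_set_nonempty h1 hn hp1)
    intro x hx
    rw [mem_setOf_eq] at hx
    by_contra hneg
    push_neg at hneg
    rw [betaCDF', clampI_of_nonpos hneg.le, binTail_zero h1] at hx
    linarith
  · apply csInf_le (quantile_set_bddBelow h1 hp0)
    rw [mem_setOf_eq, betaCDF', clampI_of_one_le (le_refl 1), binTail_one h1 hn]
    exact hp1.le

include h1 hn hp0 hp1 in
lemma betaCDF'_quantile : betaCDF' n r (genInv (betaCDF' n r) p) = p := by
  have hclosed : IsClosed {x | p ≤ betaCDF' n r x} :=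
    isClosed_le continuous_const (continuous_betaCDF' (n := n) (r := r))
  have hmem : genInv (betaCDF' n r) p ∈ {x | p ≤ betaCDF' n r x} :=
    hclosed.csInf_mem (quantile_set_nonempty h1 hn hp1) (quantile_set_bddBelow h1 hp0)
  have hge : p ≤ betaCDF' n r (genInv (betaCDF' n r) p) := hmem
  have hle : betaCDF' n r (genInv (betaCDF' n r) p) ≤ p := by
    set Q := genInv (betaCDF' n r) p with hQ
    have hlt : ∀ y < Q, betaCDF' n r y ≤ p := by
      intro y hy
      by_contra hc
      push_neg at hc
      have : y ∈ {x | p ≤ betaCDF' n r x} := le_of_lt hc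
      have h2 : Q ≤ y := csInf_le (quantile_set_bddBelow h1 hp0) this
      linarith
    have htd : Filter.Tendsto (betaCDF' n r) (nhdsWithin Q (Iio Q)) (nhds (betaCDF' n r Q)) :=
      ((continuous_betaCDF' (n := n) (r := r)).continuousAt).tendsto.mono_left
        nhdsWithin_le_nhds
    refine le_of_tendsto htd ?_
    filter_upwards [self_mem_nhdsWithin] with y hy
    exact hlt y hy
  linarith

include h1 hn in
lemma quantile_monotone {q q' : ℝ} (hq0 : 0 < q) (hq1 : q < 1) (hqq : q ≤ q') (hq'1 : q' < 1) :
    genInv (betaCDF' n r) q ≤ genInv (betaCDF' n r) q' := by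
  apply csInf_le_csInf (quantile_set_bddBelow h1 hq0) (quantile_set_nonempty h1 hn hq'1)
  intro x hx
  rw [mem_setOf_eq] at hx ⊢
  linarith

end Quantile

section Spread
variable {n r : ℕ} (h1 : 1 ≤ r) (hn : r ≤ n) {δ : ℝ} (hδ0 : 0 < δ) (hδh : δ ≤ 1/2)

include h1 hn hδ0 hδh in
lemma quantile_upper :
    genInv (betaCDF' n r) (1 - δ) ≤ ((r : ℝ) - 1) / n + Real.sqrt (Real.log (1/δ) / (2*n)) := by
  set L := Real.log (1/δ) with hL
  have hδ1 : δ < 1 := by linarith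
  have hn0 : (0:ℝ) < n := by
    have : (1:ℕ) ≤ n := le_trans h1 hn
    exact_mod_cast Nat.lt_of_lt_of_le Nat.zero_lt_one this
  have hr1 : (1:ℝ) ≤ (r:ℝ) := by exact_mod_cast h1
  have hL0 : 0 < L := Real.log_pos ((one_lt_div hδ0).mpr hδ1)
  set z := ((r : ℝ) - 1) / n + Real.sqrt (L / (2*n)) with hz
  have hz0 : 0 ≤ z := add_nonneg (div_nonneg (by linarith) hn0.le) (Real.sqrt_nonneg _)
  rcases le_or_gt 1 z with hz1 | hz1
  · exact le_trans (quantile_mem_Icc h1 hn (by linarith) (by linarith)).2 hz1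
  · apply csInf_le (quantile_set_bddBelow h1 (by linarith))
    rw [mem_setOf_eq, betaCDF', clampI_of_mem ⟨hz0, hz1.le⟩]
    have hcast : ((r - 1 : ℕ) : ℝ) = (r : ℝ) - 1 := by
      rw [Nat.cast_sub h1, Nat.cast_one]
    have hch := chernoff_low (le_trans h1 hn) (show r - 1 ≤ n by omega) hz0 hz1.le
      (p := z) (by rw [hcast, hz]; nlinarith [Real.sqrt_nonneg (L / (2*n))])
    have hexp : Real.exp (-2 * n * (z - (r - 1 : ℕ) / n) ^ 2) = δ := by
      have harg : z - ((r - 1 : ℕ) : ℝ) / n = Real.sqrt (L / (2*n)) := by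
        rw [hcast, hz]; ring
      rw [harg, Real.sq_sqrt (by positivity)]
      rw [show -2 * (n:ℝ) * (L / (2*n)) = -L by field_simp]
      rw [hL, one_div, Real.log_inv]
      rw [neg_neg, Real.exp_log hδ0]
    have hlow : lowTail n (r-1) z ≤ δ := by
      calc lowTail n (r-1) z ≤ _ := hch
        _ = δ := hexp
    have hsum := lowTail_add_binTail h1 hn z
    linarith

include h1 hn hδ0 hδh in
lemma quantile_lower :
    (r : ℝ) / n - Real.sqrt (Real.log (1/δ) / (2*n)) ≤ genInv (betaCDF' n r) δ := by
  set L := Real.log (1/δ) with hL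
  have hδ1 : δ < 1 := by linarith
  have hn0 : (0:ℝ) < n := by
    have : (1:ℕ) ≤ n := le_trans h1 hn
    exact_mod_cast Nat.lt_of_lt_of_le Nat.zero_lt_one this
  have hrn : (r:ℝ) ≤ (n:ℝ) := by exact_mod_cast hn
  have hL0 : 0 < L := Real.log_pos ((one_lt_div hδ0).mpr hδ1)
  set y := (r : ℝ) / n - Real.sqrt (L / (2*n)) with hy
  apply le_csInf (quantile_set_nonempty h1 hn hδ1)
  intro x hx
  rw [mem_setOf_eq] at hx
  by_contra hc
  push_neg at hc
  have hsq0 : 0 ≤ Real.sqrt (L / (2*n)) := Real.sqrt_nonneg _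
  have hxr : x < (r:ℝ)/n := by rw [hy] at hc; linarith
  rcases lt_or_ge x 0 with hx0 | hx0
  · rw [betaCDF', clampI_of_nonpos hx0.le, binTail_zero h1] at hx
    linarith
  · have hx1 : x ≤ 1 := le_trans hxr.le ((div_le_one hn0).mpr hrn)
    rw [betaCDF', clampI_of_mem ⟨hx0, hx1⟩, binTail_eq_lowTail hn] at hx
    have hcast : ((n - r : ℕ) : ℝ) = (n : ℝ) - r := by
      rw [Nat.cast_sub hn]
    have hch := chernoff_low (le_trans h1 hn) (show n - r ≤ n by omega)
      (p := 1 - x) (by linarith) (by linarith)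
      (by rw [hcast, div_le_iff₀ hn0]; nlinarith [(lt_div_iff₀ hn0).mp hxr])
    have harg : (1 - x) - ((n - r : ℕ) : ℝ) / n = (r:ℝ)/n - x := by
      rw [hcast]
      field_simp
      ring
    have hstrict : Real.exp (-2 * n * ((1 - x) - ((n - r : ℕ) : ℝ) / n) ^ 2) < δ := by
      rw [harg]
      have h2 : Real.sqrt (L / (2*n)) < (r:ℝ)/n - x := by rw [hy] at hc; linarith
      have h3 : L / (2*n) < ((r:ℝ)/n - x)^2 := by
        nlinarith [Real.sq_sqrt (show (0:ℝ) ≤ L / (2*n) by positivity), hsq0]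
      have h4 : -2 * (n:ℝ) * ((r:ℝ)/n - x)^2 < -L := by
        have := (div_lt_iff₀ (by positivity : (0:ℝ) < 2*n)).mp h3
        nlinarith
      calc Real.exp (-2 * n * ((r:ℝ)/n - x)^2) < Real.exp (-L) := Real.exp_lt_exp.mpr h4
        _ = δ := by rw [hL, one_div, Real.log_inv, neg_neg, Real.exp_log hδ0]
    linarith [le_trans hx hch]

include h1 hn hδ0 hδh in
lemma quantile_spread :
    genInv (betaCDF' n r) (1 - δ) - genInv (betaCDF' n r) δ
      ≤ Real.sqrt (2 * Real.log (1/δ) / ((n:ℝ) + 2)) := by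
  set L := Real.log (1/δ) with hL
  have hδ1 : δ < 1 := by linarith
  have hn0 : (0:ℝ) < n := by
    have : (1:ℕ) ≤ n := le_trans h1 hn
    exact_mod_cast Nat.lt_of_lt_of_le Nat.zero_lt_one this
  have hL0 : 0 < L := Real.log_pos ((one_lt_div hδ0).mpr hδ1)
  have hu := quantile_upper h1 hn hδ0 hδh
  have hlw := quantile_lower h1 hn hδ0 hδh
  have hd1 : genInv (betaCDF' n r) (1 - δ) ≤ 1 :=
    (quantile_mem_Icc h1 hn (by linarith) (by linarith)).2
  have hc0 : 0 ≤ genInv (betaCDF' n r) δ :=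
    (quantile_mem_Icc h1 hn hδ0 hδ1).1
  have hsub : ((r:ℝ) - 1)/n = (r:ℝ)/n - 1/n := by ring
  rcases le_or_gt ((n:ℝ) + 2) (2*L) with hcase | hcase
  · have hone : (1:ℝ) ≤ 2 * L / ((n:ℝ) + 2) := (one_le_div (by positivity)).mpr hcase
    have : (1:ℝ) ≤ Real.sqrt (2 * L / ((n:ℝ) + 2)) := by
      rw [show (1:ℝ) = Real.sqrt 1 from Real.sqrt_one.symm]
      exact Real.sqrt_le_sqrt hone
    linarith
  · set a := Real.sqrt (n:ℝ) with ha
    set b := Real.sqrt ((n:ℝ) + 2) with hb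
    set A := Real.sqrt (2*L) with hA
    have ha0 : 0 < a := Real.sqrt_pos.mpr hn0
    have hb0 : 0 < b := Real.sqrt_pos.mpr (by positivity)
    have hA0 : 0 ≤ A := Real.sqrt_nonneg _
    have ha2 : a^2 = (n:ℝ) := Real.sq_sqrt hn0.le
    have hb2 : b^2 = (n:ℝ) + 2 := Real.sq_sqrt (by positivity)
    have hab : a ≤ b := Real.sqrt_le_sqrt (by linarith)
    have hAb : A ≤ b := Real.sqrt_le_sqrt hcase.le
    -- rewrite the two square roots
    have hs1 : Real.sqrt (L / (2*n)) = A / (2*a) := by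
      have : L / (2*(n:ℝ)) = (A / (2*a))^2 := by
        rw [div_pow, hA, Real.sq_sqrt (by positivity : (0:ℝ) ≤ 2*L)]
        rw [mul_pow, ha2]
        ring_nf
      rw [this, Real.sqrt_sq (by positivity)]
    have hs2 : Real.sqrt (2 * L / ((n:ℝ) + 2)) = A / b := by
      have : 2 * L / ((n:ℝ) + 2) = (A / b)^2 := by
        rw [div_pow, hA, Real.sq_sqrt (by positivity : (0:ℝ) ≤ 2*L), hb2]
      rw [this, Real.sqrt_sq (by positivity)]
    rw [hs2]
    rw [hs1] at hu
    -- key: A/a - A/b ≤ 1/n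
    have hsqcmp : ((n:ℝ)*b)^2 ≤ (a*(1+(n:ℝ)))^2 := by
      rw [mul_pow, mul_pow, ha2, hb2]
      nlinarith [hn0]
    have hkey : (n:ℝ)*b ≤ a*(1+(n:ℝ)) := by
      have h5 := Real.sqrt_le_sqrt hsqcmp
      rwa [Real.sqrt_sq (by positivity), Real.sqrt_sq (by positivity)] at h5
    have hba : (b - a)/a ≤ 1/(n:ℝ) := by
      rw [div_le_div_iff₀ ha0 hn0]
      nlinarith
    have hAcomp : A/a - A/b ≤ 1/(n:ℝ) := by
      have e1 : A/a - A/b = A*(b-a)/(a*b) := by field_simp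
      have e2 : A*(b-a) ≤ b*(b-a) := mul_le_mul_of_nonneg_right hAb (by linarith)
      have e3 : b*(b-a)/(a*b) = (b-a)/a := by field_simp
      calc A/a - A/b = A*(b-a)/(a*b) := e1
        _ ≤ b*(b-a)/(a*b) := by
            apply div_le_div_of_nonneg_right e2 (by positivity) |>.trans_eq rfl
        _ = (b-a)/a := e3
        _ ≤ 1/(n:ℝ) := hba
    have h2a : 2 * (A/(2*a)) = A/a := by field_simp
    -- combine
    rw [← hL, hs1] at hlw
    rw [hsub] at hu
    linarith [hu, hlw, h2a, hAcomp]

end Spread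

section Slope
variable {n r : ℕ} (h1 : 1 ≤ r) (hn : r ≤ n)
variable {x ε δ t : ℝ} (hε0 : 0 < ε) (hε1 : ε < 1) (hx0 : 0 < x) (hx1 : x < 1 - ε)
  (ht : t = min x (1 - x - ε)) (hδ0 : 0 < δ) (hδt : δ < t)

include h1 hn hε0 hε1 hx0 hx1 ht hδ0 hδt in
lemma slope_bound :
    (genInv (betaCDF' n r) (x + ε) - genInv (betaCDF' n r) x) * (t - δ)
      ≤ ε * (genInv (betaCDF' n r) (1 - δ) - genInv (betaCDF' n r) δ) := by
  have htx : t ≤ x := ht ▸ min_le_left _ _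
  have ht1 : t ≤ 1 - x - ε := ht ▸ min_le_right _ _
  have ht0 : 0 < t := by
    rw [ht]; exact lt_min hx0 (by linarith)
  have hδ1 : δ < 1 := by nlinarith
  have hδx : δ < x := lt_of_lt_of_le hδt htx
  have hδxe : x + ε < 1 - δ := by nlinarith
  set a := genInv (betaCDF' n r) x with ha
  set b := genInv (betaCDF' n r) (x + ε) with hb
  set c := genInv (betaCDF' n r) δ with hc
  set d := genInv (betaCDF' n r) (1 - δ) with hd
  have hxe1 : x + ε < 1 := by linarith
  have hFa : betaCDF' n r a = x := betaCDF'_quantile h1 hn hx0 (by linarith)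
  have hFb : betaCDF' n r b = x + ε := betaCDF'_quantile h1 hn (by linarith) hxe1
  have hFc : betaCDF' n r c = δ := betaCDF'_quantile h1 hn hδ0 hδ1
  have hFd : betaCDF' n r d = 1 - δ := betaCDF'_quantile h1 hn (by linarith) (by linarith)
  have haI : a ∈ Icc (0:ℝ) 1 := quantile_mem_Icc h1 hn hx0 (by linarith)
  have hbI : b ∈ Icc (0:ℝ) 1 := quantile_mem_Icc h1 hn (by linarith) hxe1
  have hcI : c ∈ Icc (0:ℝ) 1 := quantile_mem_Icc h1 hn hδ0 hδ1
  have hdI : d ∈ Icc (0:ℝ) 1 := quantile_mem_Icc h1 hn (by linarith) (by linarith)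
  -- W-values
  have hWa : binTail n r a = x := by rw [← clampI_of_mem haI]; exact hFa
  have hWb : binTail n r b = x + ε := by rw [← clampI_of_mem hbI]; exact hFb
  have hWc : binTail n r c = δ := by rw [← clampI_of_mem hcI]; exact hFc
  have hWd : binTail n r d = 1 - δ := by rw [← clampI_of_mem hdI]; exact hFd
  -- ordering
  have hca : c ≤ a := quantile_monotone h1 hn hδ0 hδ1 hδx.le (by linarith)
  have hab : a ≤ b := quantile_monotone h1 hn hx0 (by linarith) (by linarith) hxe1
  have hbd : b ≤ d := quantile_monotone h1 hn (by linarith) hxe1 (by linarith) (by linarith)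
  have hca' : c < a := by
    rcases eq_or_lt_of_le hca with h | h
    · exfalso; rw [h] at hFc; rw [hFa] at hFc; linarith
    · exact h
  have hab' : a < b := by
    rcases eq_or_lt_of_le hab with h | h
    · exfalso; rw [h] at hFa; rw [hFb] at hFa; linarith
    · exact h
  have hbd' : b < d := by
    rcases eq_or_lt_of_le hbd with h | h
    · exfalso; rw [h] at hFb; rw [hFd] at hFb; linarith
    · exact h
  obtain ⟨m, hmI, hconv, hconc⟩ := exists_mode h1 hn
  have hεdc : 0 ≤ ε * (d - c) := mul_nonneg hε0.le (by linarith)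
  rcases le_or_gt b m with hcase1 | hcase1
  · -- convex region
    have hsl := hconv.slope_mono_adjacent
      (show c ∈ Icc (0:ℝ) m from ⟨hcI.1, by linarith⟩)
      (show b ∈ Icc (0:ℝ) m from ⟨hbI.1, hcase1⟩) hca' hab'
    rw [hWa, hWb, hWc] at hsl
    have hcross : (x - δ) * (b - a) ≤ (x + ε - x) * (a - c) :=
      (div_le_div_iff₀ (by linarith) (by linarith)).mp hsl
    have k1 : (b - a) * (t - δ) ≤ (b - a) * (x - δ) :=
      mul_le_mul_of_nonneg_left (by linarith) (by linarith)
    have k3 : ε * (a - c) ≤ ε * (d - c) :=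
      mul_le_mul_of_nonneg_left (by linarith) hε0.le
    calc (b - a) * (t - δ) ≤ (b - a) * (x - δ) := k1
      _ = (x - δ) * (b - a) := by ring
      _ ≤ (x + ε - x) * (a - c) := hcross
      _ = ε * (a - c) := by ring
      _ ≤ ε * (d - c) := k3
  · rcases le_or_gt m a with hcase2 | hcase2
    · -- concave region
      have hsl := hconc.slope_anti_adjacent
        (show a ∈ Icc m 1 from ⟨hcase2, haI.2⟩)
        (show d ∈ Icc m 1 from ⟨by linarith, hdI.2⟩) hab' hbd'
      rw [hWa, hWb, hWd] at hsl
      have hcross : (1 - δ - (x + ε)) * (b - a) ≤ (x + ε - x) * (d - b) :=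
        (div_le_div_iff₀ (by linarith) (by linarith)).mp hsl
      have k1 : (b - a) * (t - δ) ≤ (b - a) * (1 - δ - (x + ε)) :=
        mul_le_mul_of_nonneg_left (by linarith) (by linarith)
      have k3 : ε * (d - b) ≤ ε * (d - c) :=
        mul_le_mul_of_nonneg_left (by linarith) hε0.le
      calc (b - a) * (t - δ) ≤ (b - a) * (1 - δ - (x + ε)) := k1
        _ = (1 - δ - (x + ε)) * (b - a) := by ring
        _ ≤ (x + ε - x) * (d - b) := hcross
        _ = ε * (d - b) := by ring
        _ ≤ ε * (d - c) := k3
    · -- straddling the mode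
      have ham : a < m := hcase2
      have hmb : m < b := hcase1
      have hWm_lb : x ≤ binTail n r m := by
        rw [← hWa]
        exact monotoneOn_binTail h1 hn haI hmI ham.le
      have hWm_ub : binTail n r m ≤ x + ε := by
        rw [← hWb]
        exact monotoneOn_binTail h1 hn hmI hbI hmb.le
      set Wm := binTail n r m with hWm
      -- convex part: c < a < m
      have hsl1 := hconv.slope_mono_adjacent
        (show c ∈ Icc (0:ℝ) m from ⟨hcI.1, by linarith⟩)
        (show m ∈ Icc (0:ℝ) m from ⟨hmI.1, le_refl m⟩) hca' ham
      rw [hWa, hWc] at hsl1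
      have hcross1 : (x - δ) * (m - a) ≤ (Wm - x) * (a - c) :=
        (div_le_div_iff₀ (by linarith) (by linarith)).mp hsl1
      -- concave part: m < b < d
      have hsl2 := hconc.slope_anti_adjacent
        (show m ∈ Icc m 1 from ⟨le_refl m, hmI.2⟩)
        (show d ∈ Icc m 1 from ⟨by linarith, hdI.2⟩) hmb hbd'
      rw [hWb, hWd] at hsl2
      have hcross2 : (1 - δ - (x + ε)) * (b - m) ≤ (x + ε - Wm) * (d - b) :=
        (div_le_div_iff₀ (by linarith) (by linarith)).mp hsl2
      have P1 : (t - δ) * (m - a) ≤ (Wm - x) * (d - c) := by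
        calc (t - δ) * (m - a) ≤ (x - δ) * (m - a) :=
              mul_le_mul_of_nonneg_right (by linarith) (by linarith)
          _ ≤ (Wm - x) * (a - c) := hcross1
          _ ≤ (Wm - x) * (d - c) :=
              mul_le_mul_of_nonneg_left (by linarith) (by linarith)
      have P2 : (t - δ) * (b - m) ≤ (x + ε - Wm) * (d - c) := by
        calc (t - δ) * (b - m) ≤ (1 - δ - (x + ε)) * (b - m) :=
              mul_le_mul_of_nonneg_right (by linarith) (by linarith)
          _ ≤ (x + ε - Wm) * (d - b) := hcross2
          _ ≤ (x + ε - Wm) * (d - c) :=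
              mul_le_mul_of_nonneg_left (by linarith) (by linarith)
      calc (b - a) * (t - δ) = (t - δ) * (m - a) + (t - δ) * (b - m) := by ring
        _ ≤ (Wm - x) * (d - c) + (x + ε - Wm) * (d - c) := add_le_add P1 P2
        _ = ε * (d - c) := by ring

end Slope

theorem main_bound {n r : ℕ} (h1 : 1 ≤ r) (hrn : r ≤ n)
    (ε x : ℝ) (hε : ε ∈ Ioo (0:ℝ) 1) (hx : x ∈ Ioo (0:ℝ) (1 - ε)) :
    0 ≤ genInv (betaCDF' n r) (x + ε) - genInv (betaCDF' n r) x
    ∧ genInv (betaCDF' n r) (x + ε) - genInv (betaCDF' n r) x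
        ≤ ε / Real.sqrt ((n : ℝ) + 2) * (Real.sqrt 2 / gFun (min x (1 - x - ε))) := by
  obtain ⟨hε0, hε1⟩ := hε
  obtain ⟨hx0, hx1⟩ := hx
  set t := min x (1 - x - ε) with ht
  have htx : t ≤ x := min_le_left _ _
  have ht1 : t ≤ 1 - x - ε := min_le_right _ _
  have ht0 : 0 < t := lt_min hx0 (by linarith)
  have hthalf : t < 1/2 := by
    have h2t : 2*t ≤ 1 - ε := by linarith
    linarith
  have hmin : min t (1 - t) = t := min_eq_left (by linarith)
  set Δ := genInv (betaCDF' n r) (x + ε) - genInv (betaCDF' n r) x with hΔdef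
  have hΔ0 : 0 ≤ Δ := sub_nonneg.mpr
    (quantile_monotone h1 hrn hx0 (by linarith) (by linarith) (by linarith))
  set S := (fun δ => (t - δ) / Real.sqrt (Real.log (1/δ))) '' Ioo 0 (min t (1 - t)) with hS
  have hgFun : gFun t = sSup S := rfl
  have hlog_mem : ∀ δ, 0 < δ → δ < t → 0 < Real.log (1/δ) := by
    intro δ hδ0 hδt
    exact Real.log_pos ((one_lt_div hδ0).mpr (by linarith))
  have hlogt : 0 < Real.log (1/t) := Real.log_pos ((one_lt_div ht0).mpr (by linarith))
  have hbdd : BddAbove S := by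
    refine ⟨t / Real.sqrt (Real.log (1/t)), ?_⟩
    rintro e ⟨δ, hδmem, rfl⟩
    rw [hmin, mem_Ioo] at hδmem
    obtain ⟨hδ0, hδt⟩ := hδmem
    have hL := hlog_mem δ hδ0 hδt
    have hmono : Real.log (1/t) ≤ Real.log (1/δ) := by
      apply Real.log_le_log (by positivity)
      exact one_div_le_one_div_of_le hδ0 hδt.le
    have hsq : Real.sqrt (Real.log (1/t)) ≤ Real.sqrt (Real.log (1/δ)) :=
      Real.sqrt_le_sqrt hmono
    have hsqt : 0 < Real.sqrt (Real.log (1/t)) := Real.sqrt_pos.mpr hlogt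
    apply div_le_div₀ (le_of_lt ht0) (by linarith) hsqt hsq
  have hmemS : (t - t/2) / Real.sqrt (Real.log (1/(t/2))) ∈ S := by
    rw [hS, hmin]
    exact ⟨t/2, mem_Ioo.mpr ⟨by linarith, by linarith⟩, rfl⟩
  have hne : S.Nonempty := ⟨_, hmemS⟩
  have hgpos : 0 < gFun t := by
    have helem : 0 < (t - t/2) / Real.sqrt (Real.log (1/(t/2))) := by
      apply div_pos (by linarith)
      exact Real.sqrt_pos.mpr (hlog_mem (t/2) (by linarith) (by linarith))
    rw [hgFun]
    exact lt_of_lt_of_le helem (le_csSup hbdd hmemS)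
  set B := ε * Real.sqrt 2 / Real.sqrt ((n:ℝ)+2) with hB
  have hkey : ∀ e ∈ S, e * Δ ≤ B := by
    rintro e ⟨δ, hδmem, rfl⟩
    rw [hmin, mem_Ioo] at hδmem
    obtain ⟨hδ0, hδt⟩ := hδmem
    set L := Real.log (1/δ) with hL
    have hL0 : 0 < L := hlog_mem δ hδ0 hδt
    have hsqL : 0 < Real.sqrt L := Real.sqrt_pos.mpr hL0
    have hsl := slope_bound h1 hrn hε0 hε1 hx0 hx1 ht hδ0 hδt
    have hsp := quantile_spread h1 hrn hδ0 (by linarith : δ ≤ 1/2)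
    rw [← hL] at hsp
    have h2 : Δ * (t - δ) ≤ ε * Real.sqrt (2 * L / ((n:ℝ)+2)) :=
      le_trans hsl (mul_le_mul_of_nonneg_left hsp hε0.le)
    have hsqrt_eq : Real.sqrt (2 * L / ((n:ℝ)+2))
        = Real.sqrt 2 * Real.sqrt L / Real.sqrt ((n:ℝ)+2) := by
      rw [show 2 * L / ((n:ℝ)+2)
          = (Real.sqrt 2 * Real.sqrt L / Real.sqrt ((n:ℝ)+2))^2 from by
        rw [div_pow, mul_pow, Real.sq_sqrt (by norm_num : (0:ℝ) ≤ 2),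
          Real.sq_sqrt hL0.le, Real.sq_sqrt (by positivity : (0:ℝ) ≤ (n:ℝ)+2)]]
      rw [Real.sqrt_sq (by positivity)]
    have heq : ε * Real.sqrt (2 * L / ((n:ℝ)+2)) = B * Real.sqrt L := by
      rw [hsqrt_eq, hB]
      ring
    rw [div_mul_eq_mul_div, div_le_iff₀ hsqL]
    calc (t - δ) * Δ = Δ * (t - δ) := by ring
      _ ≤ ε * Real.sqrt (2 * L / ((n:ℝ)+2)) := h2
      _ = B * Real.sqrt L := heq
  constructor
  · exact hΔ0
  · rcases eq_or_lt_of_le hΔ0 with hΔ | hΔ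
    · rw [← hΔ]
      apply mul_nonneg (div_nonneg hε0.le (Real.sqrt_nonneg _))
      exact div_nonneg (Real.sqrt_nonneg _) hgpos.le
    · have hg_le : gFun t ≤ B / Δ := by
        rw [hgFun]
        exact csSup_le hne (fun e he => (le_div_iff₀ hΔ).mpr (hkey e he))
      have hmul : Δ * gFun t ≤ B := by
        rw [le_div_iff₀ hΔ] at hg_le
        nlinarith [hg_le]
      have hfin : Δ ≤ B / gFun t := by
        rw [le_div_iff₀ hgpos]
        exact hmul
      calc Δ ≤ B / gFun t := hfin
        _ = ε / Real.sqrt ((n:ℝ)+2) * (Real.sqrt 2 / gFun t) := by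
            rw [hB]; ring

end AuxProofs

/-- Local Lipschitz bound for the Beta(ℓ, n-ℓ+1) quantile function:
for `ε ∈ (0,1)` and `x ∈ (0, 1-ε)`,
`0 ≤ F⁻¹(x+ε) - F⁻¹(x) ≤ (ε/√(n+2)) · √2 / g(min{x, 1-x-ε})`. -/
theorem betaQuantile_increment_bound (n : ℕ) (hn : 1 ≤ n)
    (ℓ : ℕ) (hℓ1 : 1 ≤ ℓ) (hℓn : ℓ ≤ n)
    (ε x : ℝ) (hε : ε ∈ Ioo (0:ℝ) 1) (hx : x ∈ Ioo (0:ℝ) (1 - ε)) :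
    0 ≤ betaQuantile n ℓ (x + ε) - betaQuantile n ℓ x
    ∧ betaQuantile n ℓ (x + ε) - betaQuantile n ℓ x
        ≤ ε / Real.sqrt ((n : ℝ) + 2) * (Real.sqrt 2 / gFun (min x (1 - x - ε))) := by
  have hbeq : betaCDF n ℓ = betaCDF' n ℓ := funext (fun s => betaCDF_eq hℓ1 hℓn s)
  have hq : ∀ p, betaQuantile n ℓ p = genInv (betaCDF' n ℓ) p := by
    intro p
    rw [betaQuantile, hbeq]
  simp only [hq]
  exact main_bound hℓ1 hℓn ε x hε hx
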